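/- Let {b_0, b_1, …, b_l} and {c_0, c_1, …, c_l} be two finite sequences of non-negative real numbers of length l+1 ≥ 2. Suppose that for every index i with 0 ≤ i ≤ l−1 the following implication is true: if c_i < 1 then b_{i+1} ≤ b_i/(1−c_i) and c_{i+1} ≤ 2·c_i²·[b_i/(1−c_i)]². Also suppose that b_0 ≥ 1 and that ε := 6·b_0²·c_0 ≤ 2/3. Then for every index i = 0, 1, …, l one has c_i ≤ ε^(2^i)/(6·b_0²) and b_i/(1−c_i) ≤ √3·b_0. -/

import Mathlib

set_option maxHeartbeats 1000000


/-- Lemma 4 of the paper: the recursive-inequality lemma for finite sequences. -/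
theorem finite_recursive_inequality_lemma
    (l : ℕ) (hl : 1 ≤ l) (b c : ℕ → ℝ)
    (hb : ∀ i ≤ l, 0 ≤ b i) (hc : ∀ i ≤ l, 0 ≤ c i)
    (hrec : ∀ i < l, c i < 1 →
      b (i + 1) ≤ b i / (1 - c i) ∧
      c (i + 1) ≤ 2 * c i ^ 2 * (b i / (1 - c i)) ^ 2)
    (hb0 : 1 ≤ b 0)
    (hε : 6 * b 0 ^ 2 * c 0 ≤ 2 / 3) :
    ∀ i ≤ l,
      c i ≤ (6 * b 0 ^ 2 * c 0) ^ (2 ^ i) / (6 * b 0 ^ 2) ∧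
      b i / (1 - c i) ≤ Real.sqrt 3 * b 0 := by
  set B := b 0 with hBdef
  set E := 6 * B ^ 2 * c 0 with hEdef
  have hc0 : 0 ≤ c 0 := hc 0 (by omega)
  have hB1 : 1 ≤ B := hb0
  have hB2 : (1:ℝ) ≤ B ^ 2 := by nlinarith
  have h6B : (0:ℝ) < 6 * B ^ 2 := by nlinarith
  have hE0 : 0 ≤ E := by nlinarith
  have hE : E ≤ 2 / 3 := hε
  -- pointwise bound on powers of E
  have hEpow : ∀ j : ℕ, E ^ (2 ^ j) ≤ (2/3) ^ (j + 1) := by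
    intro j
    calc E ^ (2 ^ j) ≤ (2/3 : ℝ) ^ (2 ^ j) := pow_le_pow_left₀ hE0 hE _
      _ ≤ (2/3 : ℝ) ^ (j + 1) :=
        pow_le_pow_of_le_one (by norm_num) (by norm_num) (Nat.lt_two_pow_self (n := j))
  have hcb : ∀ j : ℕ, E ^ (2 ^ j) / (6 * B ^ 2) ≤ (2/3) ^ (j + 1) / 6 := by
    intro j
    exact div_le_div₀ (by positivity) (hEpow j) (by norm_num) (by nlinarith)
  -- partial sums of c are at most 1/3
  have hSsum : ∀ n : ℕ, (∀ j < n, c j ≤ E ^ (2 ^ j) / (6 * B ^ 2)) →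
      ∑ j ∈ Finset.range n, c j ≤ 1 / 3 := by
    intro n hn
    have h1 : ∑ j ∈ Finset.range n, c j ≤ ∑ j ∈ Finset.range n, (2/3 : ℝ) ^ (j + 1) / 6 := by
      apply Finset.sum_le_sum
      intro j hj
      exact (hn j (Finset.mem_range.mp hj)).trans (hcb j)
    have h2 : ∑ j ∈ Finset.range n, (2/3 : ℝ) ^ (j + 1) / 6
        = (1/9) * ∑ j ∈ Finset.range n, (2/3 : ℝ) ^ j := by
      rw [Finset.mul_sum]
      apply Finset.sum_congr rfl
      intro j _
      rw [pow_succ]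
      ring
    have h3 : ∑ j ∈ Finset.range n, (2/3 : ℝ) ^ j ≤ 3 := by
      rw [geom_sum_eq (by norm_num) n]
      have : (0:ℝ) ≤ (2/3 : ℝ) ^ n := by positivity
      rw [div_le_iff_of_neg (by norm_num)]
      linarith
    rw [h2] at h1
    linarith
  have hSnonneg : ∀ n ≤ l + 1, (0:ℝ) ≤ ∑ j ∈ Finset.range n, c j := by
    intro n hn
    apply Finset.sum_nonneg
    intro j hj
    exact hc j (by have := Finset.mem_range.mp hj; omega)
  -- the key step: from the invariant at i, get the quotient bound
  have key1 : ∀ i ≤ l, (∀ j ≤ i, c j ≤ E ^ (2 ^ j) / (6 * B ^ 2)) →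
      b i ≤ B / (1 - ∑ j ∈ Finset.range i, c j) →
      b i / (1 - c i) ≤ B / (1 - ∑ j ∈ Finset.range (i + 1), c j) := by
    intro i hi hcj hbi
    have hS : ∑ j ∈ Finset.range i, c j ≤ 1 / 3 := hSsum i (fun j hj => hcj j (by omega))
    have hS' : ∑ j ∈ Finset.range (i+1), c j ≤ 1 / 3 := hSsum (i+1) (fun j hj => hcj j (by omega))
    have hS0 : (0:ℝ) ≤ ∑ j ∈ Finset.range i, c j := hSnonneg i (by omega)
    have hci0 : 0 ≤ c i := hc i hi
    have hci : c i ≤ (2/3) ^ (i + 1) / 6 := (hcj i le_rfl).trans (hcb i)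
    have hp : (2/3 : ℝ) ^ (i + 1) ≤ 2/3 := by
      calc (2/3 : ℝ) ^ (i + 1) ≤ (2/3 : ℝ) ^ 1 :=
        pow_le_pow_of_le_one (by norm_num) (by norm_num) (by omega)
        _ = 2/3 := pow_one _
    have hci1 : c i < 1 := by linarith
    have h1S : (0:ℝ) < 1 - ∑ j ∈ Finset.range i, c j := by linarith
    have h1c : (0:ℝ) < 1 - c i := by linarith
    have hSrec : ∑ j ∈ Finset.range (i+1), c j = (∑ j ∈ Finset.range i, c j) + c i :=
      Finset.sum_range_succ c i
    have h1S' : (0:ℝ) < 1 - ∑ j ∈ Finset.range (i+1), c j := by linarith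
    have hbipos : 0 ≤ b i := hb i hi
    have hbm : b i * (1 - ∑ j ∈ Finset.range i, c j) ≤ B := by
      rw [← le_div_iff₀ h1S] at *
      exact hbi
    rw [div_le_div_iff₀ h1c h1S']
    rw [hSrec]
    nlinarith [mul_nonneg hbipos (mul_nonneg hS0 hci0), mul_le_mul_of_nonneg_right hbm (le_of_lt h1c)]
  -- main invariant by induction
  have key : ∀ i, i ≤ l → (∀ j ≤ i, c j ≤ E ^ (2 ^ j) / (6 * B ^ 2)) ∧
      b i ≤ B / (1 - ∑ j ∈ Finset.range i, c j) := by
    intro i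
    induction i with
    | zero =>
      intro _
      constructor
      · intro j hj
        interval_cases j
        have : E ^ (2 ^ 0) = E := by norm_num
        rw [this, le_div_iff₀ h6B, hEdef]
        ring_nf
        exact le_rfl
      · simp [hBdef]
    | succ i ih =>
      intro hi1
      have hi : i ≤ l := by omega
      have hil : i < l := by omega
      obtain ⟨hcj, hbi⟩ := ih hi
      have hci0 : 0 ≤ c i := hc i hi
      have hci : c i ≤ (2/3) ^ (i + 1) / 6 := (hcj i le_rfl).trans (hcb i)
      have hp : (2/3 : ℝ) ^ (i + 1) ≤ 2/3 := by
        calc (2/3 : ℝ) ^ (i + 1) ≤ (2/3 : ℝ) ^ 1 :=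
          pow_le_pow_of_le_one (by norm_num) (by norm_num) (by omega)
          _ = 2/3 := pow_one _
      have hci1 : c i < 1 := by linarith
      have h1c : (0:ℝ) < 1 - c i := by linarith
      obtain ⟨hb', hc'⟩ := hrec i hil hci1
      have hq : b i / (1 - c i) ≤ B / (1 - ∑ j ∈ Finset.range (i+1), c j) := key1 i hi hcj hbi
      have hS' : ∑ j ∈ Finset.range (i+1), c j ≤ 1 / 3 := hSsum (i+1) (fun j hj => hcj j (by omega))
      have hS0' : (0:ℝ) ≤ ∑ j ∈ Finset.range (i+1), c j := hSnonneg (i+1) (by omega)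
      have h1S' : (0:ℝ) < 1 - ∑ j ∈ Finset.range (i+1), c j := by linarith
      have hqB : b i / (1 - c i) ≤ (3/2) * B := by
        refine hq.trans ?_
        rw [div_le_iff₀ h1S']
        nlinarith
      have hcnew : c (i+1) ≤ E ^ (2 ^ (i+1)) / (6 * B ^ 2) := by
        have hq0 : 0 ≤ b i / (1 - c i) := div_nonneg (hb i hi) (le_of_lt h1c)
        have ht : c i ^ 2 ≤ (E ^ (2 ^ i) / (6 * B ^ 2)) ^ 2 :=
          pow_le_pow_left₀ hci0 (hcj i le_rfl) 2
        have ht2 : (b i / (1 - c i)) ^ 2 ≤ ((3/2) * B) ^ 2 :=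
          pow_le_pow_left₀ hq0 hqB 2
        have hE2 : E ^ (2 ^ (i+1)) = (E ^ (2 ^ i)) ^ 2 := by
          rw [pow_succ, pow_mul]
        have hstep : 2 * c i ^ 2 * (b i / (1 - c i)) ^ 2
            ≤ 2 * (E ^ (2 ^ i) / (6 * B ^ 2)) ^ 2 * ((3/2) * B) ^ 2 := by
          have hmul := mul_le_mul ht ht2 (sq_nonneg _) (sq_nonneg _)
          linarith [hmul]
        have heq : 2 * (E ^ (2 ^ i) / (6 * B ^ 2)) ^ 2 * ((3/2) * B) ^ 2
            = (E ^ (2 ^ i)) ^ 2 / (8 * B ^ 2) := by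
          field_simp
          ring
        have hle : (E ^ (2 ^ i)) ^ 2 / (8 * B ^ 2) ≤ (E ^ (2 ^ i)) ^ 2 / (6 * B ^ 2) :=
          div_le_div₀ (by positivity) le_rfl h6B (by nlinarith)
        calc c (i+1) ≤ 2 * c i ^ 2 * (b i / (1 - c i)) ^ 2 := hc'
          _ ≤ 2 * (E ^ (2 ^ i) / (6 * B ^ 2)) ^ 2 * ((3/2) * B) ^ 2 := hstep
          _ = (E ^ (2 ^ i)) ^ 2 / (8 * B ^ 2) := heq
          _ ≤ (E ^ (2 ^ i)) ^ 2 / (6 * B ^ 2) := hle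
          _ = E ^ (2 ^ (i+1)) / (6 * B ^ 2) := by rw [hE2]
      constructor
      · intro j hj
        rcases Nat.lt_or_ge j (i+1) with h | h
        · exact hcj j (by omega)
        · have : j = i + 1 := by omega
          rw [this]; exact hcnew
      · exact hb'.trans hq
  -- conclude
  intro i hi
  obtain ⟨hcj, hbi⟩ := key i hi
  refine ⟨hcj i le_rfl, ?_⟩
  have hq : b i / (1 - c i) ≤ B / (1 - ∑ j ∈ Finset.range (i+1), c j) := key1 i hi hcj hbi
  have hS' : ∑ j ∈ Finset.range (i+1), c j ≤ 1 / 3 := hSsum (i+1) (fun j hj => hcj j (by omega))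
  have hS0' : (0:ℝ) ≤ ∑ j ∈ Finset.range (i+1), c j := hSnonneg (i+1) (by omega)
  have h1S' : (0:ℝ) < 1 - ∑ j ∈ Finset.range (i+1), c j := by linarith
  have hqB : b i / (1 - c i) ≤ (3/2) * B := by
    refine hq.trans ?_
    rw [div_le_iff₀ h1S']
    nlinarith
  have hsqrt : (3/2 : ℝ) ≤ Real.sqrt 3 := by
    nlinarith [Real.sq_sqrt (show (0:ℝ) ≤ 3 by norm_num), Real.sqrt_nonneg 3]
  calc b i / (1 - c i) ≤ (3/2) * B := hqB
    _ ≤ Real.sqrt 3 * B := by nlinarith
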